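/- Let m₁, m₂, m₃, f, φ : ℝ → ℝ with m₁, m₂, m₃ differentiable, satisfying the geodesic Darboux system m₁' = m₃ − f, m₂' = φ·m₃, m₃' = −m₁ − φ·m₂ on all of ℝ. If the function m₁² + m₂² + m₃² is constant, then m₁(θ)·f(θ) = 0 for all θ ∈ ℝ. -/

import Mathlib

/-- Geodesic case: if the coefficients satisfy the geodesic Darboux system and
`m₁² + m₂² + m₃²` is constant, then `m₁ · f ≡ 0`. -/
theorem geodesic_constant_breadth_m1_mul_f_eq_zero
    (m₁ m₂ m₃ f φ : ℝ → ℝ)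
    (hm₁ : Differentiable ℝ m₁) (hm₂ : Differentiable ℝ m₂)
    (hm₃ : Differentiable ℝ m₃)
    (h1 : ∀ θ, deriv m₁ θ = m₃ θ - f θ)
    (h2 : ∀ θ, deriv m₂ θ = φ θ * m₃ θ)
    (h3 : ∀ θ, deriv m₃ θ = -m₁ θ - φ θ * m₂ θ)
    (hconst : ∃ C : ℝ, ∀ θ, (m₁ θ) ^ 2 + (m₂ θ) ^ 2 + (m₃ θ) ^ 2 = C) :
    ∀ θ, m₁ θ * f θ = 0 := by
  obtain ⟨C, hC⟩ := hconst
  intro θ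
  have hg : (fun θ => (m₁ θ) ^ 2 + (m₂ θ) ^ 2 + (m₃ θ) ^ 2) = fun _ => C := funext hC
  have hd : deriv (fun θ => (m₁ θ) ^ 2 + (m₂ θ) ^ 2 + (m₃ θ) ^ 2) θ = 0 := by
    rw [hg]; simp
  have hcalc : deriv (fun θ => (m₁ θ) ^ 2 + (m₂ θ) ^ 2 + (m₃ θ) ^ 2) θ
      = 2 * m₁ θ * deriv m₁ θ + 2 * m₂ θ * deriv m₂ θ + 2 * m₃ θ * deriv m₃ θ := by
    have e1 : DifferentiableAt ℝ (fun x => m₁ x ^ 2) θ := ((hm₁ θ).pow 2)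
    have e2 : DifferentiableAt ℝ (fun x => m₂ x ^ 2) θ := ((hm₂ θ).pow 2)
    have e3 : DifferentiableAt ℝ (fun x => m₃ x ^ 2) θ := ((hm₃ θ).pow 2)
    rw [deriv_fun_add (e1.fun_add e2) e3,
        deriv_fun_add e1 e2,
        deriv_fun_pow (hm₁ θ) 2, deriv_fun_pow (hm₂ θ) 2, deriv_fun_pow (hm₃ θ) 2]
    ring
  rw [hcalc, h1, h2, h3] at hd
  nlinarith [hd]
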